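/- Let ρ(r) be a zero proximate order with V(r) = r^{ρ(r)} satisfying V(r)V(1/r) = 1, and let K : (0,∞) → ℝ be such that for some δ > 0 both t ↦ t^δ K(t) and t ↦ t^{−δ} K(t) are in L¹(0,∞). Then lim_{r→∞} (1/(r V(r))) ∫₀^∞ K(t/r) V(t) dt = ∫₀^∞ K(t) dt. -/

import Mathlib

open Filter Set MeasureTheory

lemma aux_mono {L E : ℝ → ℝ} (hL : ∀ u > 0, HasDerivAt L (E u / u) u)
    {a b η : ℝ} (ha : 0 < a) (hab : a ≤ b) (_hη : 0 ≤ η)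
    (hbd : ∀ u ∈ Set.Icc a b, |E u| ≤ η) :
    |L b - L a| ≤ η * (Real.log b - Real.log a) := by
  have hsub : ∀ u ∈ Set.Icc a b, 0 < u := fun u hu => lt_of_lt_of_le ha hu.1
  have hlogcont : ContinuousOn Real.log (Set.Icc a b) :=
    Real.continuousOn_log.mono (fun u hu => ne_of_gt (hsub u hu))
  have hLcont : ContinuousOn L (Set.Icc a b) :=
    fun u hu => ((hL u (hsub u hu)).continuousAt).continuousWithinAt
  have key : ∀ c : ℝ, c = 1 ∨ c = -1 →
      MonotoneOn (fun u => η * Real.log u - c * L u) (Set.Icc a b) := by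
    intro c hc
    apply monotoneOn_of_deriv_nonneg (convex_Icc a b)
    · exact (hlogcont.const_smul η).sub (hLcont.const_smul c)
    · intro u hu
      rw [interior_Icc] at hu
      have hu0 : 0 < u := hsub u (Ioo_subset_Icc_self hu)
      exact (((Real.hasDerivAt_log hu0.ne').const_mul η).sub
        ((hL u hu0).const_mul c)).differentiableAt.differentiableWithinAt
    · intro u hu
      rw [interior_Icc] at hu
      have hu0 : 0 < u := hsub u (Ioo_subset_Icc_self hu)
      have hd := (((Real.hasDerivAt_log hu0.ne').const_mul η).sub
        ((hL u hu0).const_mul c)).deriv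
      rw [show deriv (fun u => η * Real.log u - c * L u) u = η * u⁻¹ - c * (E u / u) from hd]
      have hb := hbd u (Ioo_subset_Icc_self hu)
      obtain ⟨hbl, hbr⟩ := abs_le.1 hb
      have h1 : c * E u ≤ η := by
        rcases hc with h | h <;> subst h <;> linarith
      have : η * u⁻¹ - c * (E u / u) = (η - c * E u) / u := by field_simp
      rw [this]
      exact div_nonneg (by linarith) hu0.le
  have ham : a ∈ Set.Icc a b := ⟨le_refl a, hab⟩
  have hbm : b ∈ Set.Icc a b := ⟨hab, le_refl b⟩
  have h1 := key 1 (Or.inl rfl) ham hbm hab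
  have h2 := key (-1) (Or.inr rfl) ham hbm hab
  simp only [one_mul, neg_one_mul, sub_neg_eq_add] at h1 h2
  rw [abs_le]
  constructor <;> linarith

set_option maxHeartbeats 1000000 in
/-- Theorem C: for a zero proximate order with `V(r)V(1/r) = 1` and a
kernel `K` with `t^{±δ} K(t) ∈ L¹(0,∞)`,
`(1/(rV(r))) ∫₀^∞ K(t/r) V(t) dt → ∫₀^∞ K(t) dt`. -/
theorem stmt17 (ρ ρ' : ℝ → ℝ)
    (hderiv : ∀ r > 0, HasDerivAt ρ (ρ' r) r)
    (hρ0 : Tendsto ρ atTop (nhds 0))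
    (hslow : Tendsto (fun r => r * ρ' r * Real.log r) atTop (nhds 0))
    (hsym : ∀ r > (0 : ℝ), r ^ ρ r * (1 / r) ^ ρ (1 / r) = 1)
    (K : ℝ → ℝ) (δ : ℝ) (hδ : 0 < δ)
    (hK1 : MeasureTheory.IntegrableOn (fun t => t ^ δ * K t) (Set.Ioi 0))
    (hK2 : MeasureTheory.IntegrableOn (fun t => t ^ (-δ) * K t) (Set.Ioi 0)) :
    Tendsto
      (fun r => (1 / (r * r ^ ρ r)) * ∫ t in Set.Ioi (0 : ℝ), K (t / r) * t ^ ρ t)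
      atTop (nhds (∫ t in Set.Ioi (0 : ℝ), K t)) := by
  set L : ℝ → ℝ := fun u => ρ u * Real.log u with hLdef
  set E : ℝ → ℝ := fun u => u * ρ' u * Real.log u + ρ u with hEdef
  have hLderiv : ∀ u > 0, HasDerivAt L (E u / u) u := by
    intro u hu
    have h := ((hderiv u hu).mul (Real.hasDerivAt_log hu.ne'))
    refine h.congr_deriv ?_
    simp only [hEdef]
    field_simp
  have hE0 : Tendsto E atTop (nhds 0) := by
    simpa using hslow.add hρ0
  -- symmetry : L (1/u) = - L u
  have hLsym : ∀ u > 0, L (1 / u) = - L u := by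
    intro u hu
    have h := hsym u hu
    have h1 : Real.log (u ^ ρ u * (1 / u) ^ ρ (1 / u)) = 0 := by rw [h, Real.log_one]
    rw [Real.log_mul (Real.rpow_pos_of_pos hu _).ne' (Real.rpow_pos_of_pos (by positivity) _).ne',
      Real.log_rpow hu, Real.log_rpow (by positivity : (0:ℝ) < 1 / u)] at h1
    simp only [hLdef]
    rw [Real.log_div one_ne_zero hu.ne', Real.log_one] at h1 ⊢
    linarith
  -- two-point bound from derivative bound
  have pair_bound : ∀ η : ℝ, 0 ≤ η → ∀ R : ℝ, 0 < R → (∀ u, R ≤ u → |E u| ≤ η) →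
      ∀ r, R ≤ r → ∀ s, 0 < s → R ≤ r * s → |L (r * s) - L r| ≤ η * |Real.log s| := by
    intro η hη R hR hE r hr s hs hrs
    have hr0 : 0 < r := lt_of_lt_of_le hR hr
    have hlog : Real.log (r * s) = Real.log r + Real.log s :=
      Real.log_mul hr0.ne' hs.ne'
    rcases le_total r (r * s) with h | h
    · have hs1 : (1 : ℝ) ≤ s := by
        by_contra hc
        push_neg at hc
        nlinarith
      have := aux_mono hLderiv hr0 h hη (fun u hu => hE u (le_trans hr hu.1))
      rw [abs_of_nonneg (Real.log_nonneg hs1)]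
      calc |L (r * s) - L r| ≤ η * (Real.log (r * s) - Real.log r) := this
        _ = η * Real.log s := by rw [hlog]; ring
    · have hs1 : s ≤ (1 : ℝ) := by
        by_contra hc
        push_neg at hc
        nlinarith
      have hrs0 : 0 < r * s := lt_of_lt_of_le hR hrs
      have := aux_mono hLderiv hrs0 h hη (fun u hu => hE u (le_trans hrs hu.1))
      have hlogs : Real.log s ≤ 0 := Real.log_nonpos hs.le hs1
      rw [abs_sub_comm, abs_of_nonpos hlogs]
      calc |L r - L (r * s)| ≤ η * (Real.log r - Real.log (r * s)) := this
        _ = η * (- Real.log s) := by rw [hlog]; ring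
  -- choose A ≥ 1 with |E u| ≤ δ/2 for u ≥ A
  have hEsmall : ∀ᶠ u in atTop, |E u| ≤ δ / 2 := by
    have h := Metric.tendsto_nhds.1 hE0 (δ / 2) (by linarith)
    filter_upwards [h] with u hu
    rw [Real.dist_eq, sub_zero] at hu
    exact hu.le
  obtain ⟨A₀, hA₀⟩ := eventually_atTop.1 hEsmall
  set A : ℝ := max A₀ 1 with hAdef
  have hA1 : (1 : ℝ) ≤ A := le_max_right _ _
  have hA0 : (0 : ℝ) < A := lt_of_lt_of_le one_pos hA1
  have hAE : ∀ u, A ≤ u → |E u| ≤ δ / 2 := fun u hu => hA₀ u (le_trans (le_max_left _ _) hu)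
  have hAinv : (0 : ℝ) < A⁻¹ := by positivity
  have hAA : A⁻¹ ≤ A := by
    calc A⁻¹ ≤ 1 := inv_le_one_of_one_le₀ hA1
      _ ≤ A := hA1
  -- continuity of L on Ioi 0
  have hLcont : ContinuousOn L (Set.Ioi 0) :=
    fun u hu => ((hLderiv u hu).continuousAt).continuousWithinAt
  -- bound on compact
  obtain ⟨C₀, hC₀⟩ := (isCompact_Icc : IsCompact (Set.Icc A⁻¹ A)).exists_bound_of_continuousOn
    (hLcont.mono (fun u hu => lt_of_lt_of_le hAinv hu.1))
  set C : ℝ := max C₀ 0 with hCdef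
  have hC : ∀ u ∈ Set.Icc A⁻¹ A, |L u| ≤ C := by
    intro u hu
    calc |L u| = ‖L u‖ := (Real.norm_eq_abs _).symm
      _ ≤ C₀ := hC₀ u hu
      _ ≤ C := le_max_left _ _
  have hCpos : 0 ≤ C := le_max_right _ _
  have hlogA : 0 ≤ Real.log A := Real.log_nonneg hA1
  -- global bound : |L u| ≤ C + δ/2 * |log u|
  have hB : ∀ u : ℝ, 0 < u → |L u| ≤ C + δ / 2 * |Real.log u| := by
    have haux : ∀ u : ℝ, A ≤ u → |L u| ≤ C + δ / 2 * |Real.log u| := by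
      intro u hu
      have h1 := aux_mono hLderiv hA0 hu (by linarith)
        (fun v hv => hAE v hv.1)
      have hlogu : 0 ≤ Real.log u := Real.log_nonneg (le_trans hA1 hu)
      have hLA : |L A| ≤ C := hC A ⟨hAA, le_refl A⟩
      have h2 : |L u| ≤ |L A| + |L u - L A| := by
        calc |L u| = |L A + (L u - L A)| := by ring_nf
          _ ≤ |L A| + |L u - L A| := abs_add_le _ _
      rw [abs_of_nonneg hlogu]
      have hlogAu : Real.log A ≤ Real.log u :=
        Real.log_le_log (by positivity) hu
      nlinarith [abs_nonneg (L u - L A)]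
    intro u hu
    rcases le_or_gt A⁻¹ u with h1 | h1
    · rcases le_or_gt u A with h2 | h2
      · calc |L u| ≤ C := hC u ⟨h1, h2⟩
          _ ≤ C + δ / 2 * |Real.log u| := by nlinarith [abs_nonneg (Real.log u)]
      · exact haux u h2.le
    · have hinv : A ≤ u⁻¹ := by
        rw [← one_div, le_div_iff₀ hu]
        nlinarith [mul_lt_mul_of_pos_left h1 hA0, mul_inv_cancel₀ hA0.ne']
      have := haux u⁻¹ hinv
      have hsymu : L u = - L u⁻¹ := by
        have h := hLsym u⁻¹ (by positivity)
        rw [one_div, inv_inv] at h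
        linarith
      rw [hsymu, abs_neg]
      calc |L u⁻¹| ≤ C + δ / 2 * |Real.log u⁻¹| := this
        _ = C + δ / 2 * |Real.log u| := by rw [Real.log_inv, abs_neg]
  -- domination estimate
  set C₂ : ℝ := 2 * C + δ * Real.log A with hC₂def
  have hdom : ∀ r : ℝ, A ≤ r → ∀ s : ℝ, 0 < s →
      |L (r * s) - L r| ≤ C₂ + δ * |Real.log s| := by
    intro r hr s hs
    have hr0 : 0 < r := lt_of_lt_of_le hA0 hr
    rcases le_or_gt A (r * s) with h | h
    · have := pair_bound (δ / 2) (by linarith) A hA0 hAE r hr s hs h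
      nlinarith [abs_nonneg (Real.log s)]
    · have hrs0 : 0 < r * s := mul_pos hr0 hs
      have h1 := hB r hr0
      have h2 := hB (r * s) hrs0
      have hlog : Real.log (r * s) = Real.log r + Real.log s :=
        Real.log_mul hr0.ne' hs.ne'
      have hx : 0 ≤ Real.log r := Real.log_nonneg (le_trans hA1 hr)
      have hxy : Real.log r + Real.log s ≤ Real.log A := by
        rw [← hlog]; exact Real.log_le_log hrs0 h.le
      have habs1 : |Real.log r + Real.log s| ≤ Real.log A + |Real.log s| := by
        rw [abs_le]
        constructor
        · nlinarith [neg_abs_le (Real.log s)]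
        · nlinarith [abs_nonneg (Real.log s)]
      have habs2 : |Real.log r| ≤ Real.log A + |Real.log s| := by
        rw [abs_of_nonneg hx]
        nlinarith [neg_abs_le (Real.log s)]
      rw [hlog] at h2
      calc |L (r * s) - L r| ≤ |L (r * s)| + |L r| := abs_sub _ _
        _ ≤ C₂ + δ * |Real.log s| := by nlinarith
  -- measurability of K
  have hrpowcont : ∀ c : ℝ, ContinuousOn (fun t : ℝ => t ^ c) (Set.Ioi 0) :=
    fun c t ht => (Real.continuousAt_rpow_const t c (Or.inl (ne_of_gt ht))).continuousWithinAt
  have hKmeas : AEStronglyMeasurable K (MeasureTheory.volume.restrict (Set.Ioi 0)) := by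
    have hm1 := hK1.aestronglyMeasurable
    have hm2 := (((hrpowcont (-δ)).aestronglyMeasurable measurableSet_Ioi).mul hm1)
    apply hm2.congr
    filter_upwards [MeasureTheory.ae_restrict_mem measurableSet_Ioi] with t ht
    have ht0 : (0 : ℝ) < t := ht
    have hone : t ^ (-δ) * t ^ δ = 1 := by
      rw [← Real.rpow_add ht0]
      simp
    calc t ^ (-δ) * (t ^ δ * K t) = (t ^ (-δ) * t ^ δ) * K t := by ring
      _ = K t := by rw [hone, one_mul]
  -- K is integrable on Ioi 0
  have hgint : MeasureTheory.Integrable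
      (fun t => |t ^ δ * K t| + |t ^ (-δ) * K t|)
      (MeasureTheory.volume.restrict (Set.Ioi 0)) := hK1.abs.add hK2.abs
  have hrpow_ge1 : ∀ t : ℝ, 0 < t → (1 : ℝ) ≤ t ^ δ + t ^ (-δ) := by
    intro t ht
    rcases le_or_gt 1 t with h | h
    · have : (1 : ℝ) = t ^ (0 : ℝ) := by rw [Real.rpow_zero]
      rw [this]
      have h2 := Real.rpow_le_rpow_of_exponent_le h (le_of_lt hδ)
      have h3 : (0 : ℝ) ≤ t ^ (-δ) := Real.rpow_nonneg ht.le _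
      rw [Real.rpow_zero] at h2 ⊢
      nlinarith
    · have h2 := Real.rpow_le_rpow_of_exponent_ge ht h.le (by linarith : -δ ≤ (0:ℝ))
      have h3 : (0 : ℝ) ≤ t ^ δ := Real.rpow_nonneg ht.le _
      rw [Real.rpow_zero] at h2
      nlinarith
  have hKint : MeasureTheory.IntegrableOn K (Set.Ioi 0) := by
    apply MeasureTheory.Integrable.mono' hgint hKmeas
    filter_upwards [MeasureTheory.ae_restrict_mem measurableSet_Ioi] with t ht
    have ht0 : (0 : ℝ) < t := ht
    have h1 : |t ^ δ * K t| = t ^ δ * |K t| := by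
      rw [abs_mul, abs_of_nonneg (Real.rpow_nonneg ht0.le _)]
    have h2 : |t ^ (-δ) * K t| = t ^ (-δ) * |K t| := by
      rw [abs_mul, abs_of_nonneg (Real.rpow_nonneg ht0.le _)]
    rw [Real.norm_eq_abs, h1, h2]
    calc |K t| = |K t| * 1 := (mul_one _).symm
      _ ≤ |K t| * (t ^ δ + t ^ (-δ)) :=
          mul_le_mul_of_nonneg_left (hrpow_ge1 t ht0) (abs_nonneg _)
      _ = t ^ δ * |K t| + t ^ (-δ) * |K t| := by ring
  -- the dominating function
  set g : ℝ → ℝ := fun s => Real.exp C₂ * (|s ^ δ * K s| + |s ^ (-δ) * K s|) with hgdef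
  have hg_int : MeasureTheory.Integrable g (MeasureTheory.volume.restrict (Set.Ioi 0)) :=
    hgint.const_mul _
  -- a.e. measurability of the family
  have hF_meas : ∀ᶠ r in atTop, AEStronglyMeasurable
      (fun s => K s * Real.exp (L (r * s) - L r))
      (MeasureTheory.volume.restrict (Set.Ioi 0)) := by
    filter_upwards [eventually_gt_atTop (0 : ℝ)] with r hr
    have hcont : ContinuousOn (fun s : ℝ => Real.exp (L (r * s) - L r)) (Set.Ioi 0) := by
      apply Real.continuous_exp.comp_continuousOn
      exact (hLcont.comp (continuous_mul_left r).continuousOn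
        (fun s hs => mul_pos hr hs)).sub continuousOn_const
    exact hKmeas.mul (hcont.aestronglyMeasurable measurableSet_Ioi)
  -- uniform bound
  have h_bound : ∀ᶠ r in atTop, ∀ᵐ s ∂(MeasureTheory.volume.restrict (Set.Ioi 0)),
      ‖K s * Real.exp (L (r * s) - L r)‖ ≤ g s := by
    filter_upwards [eventually_ge_atTop A] with r hr
    filter_upwards [MeasureTheory.ae_restrict_mem measurableSet_Ioi] with s hs
    have hs0 : (0 : ℝ) < s := hs
    have hexp1 : Real.exp (L (r * s) - L r) ≤ Real.exp (C₂ + δ * |Real.log s|) :=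
      Real.exp_le_exp.2 (le_trans (le_abs_self _) (hdom r hr s hs0))
    have hexp2 : Real.exp (δ * |Real.log s|) ≤ s ^ δ + s ^ (-δ) := by
      rcases le_or_gt 1 s with h | h
      · rw [abs_of_nonneg (Real.log_nonneg h)]
        have : Real.exp (δ * Real.log s) = s ^ δ := by
          rw [Real.rpow_def_of_pos hs0, mul_comm (Real.log s) δ]
        rw [this]
        linarith [Real.rpow_nonneg hs0.le (-δ)]
      · rw [abs_of_nonpos (Real.log_nonpos hs0.le h.le)]
        have : Real.exp (δ * -Real.log s) = s ^ (-δ) := by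
          rw [Real.rpow_def_of_pos hs0]
          ring_nf
        rw [this]
        linarith [Real.rpow_nonneg hs0.le δ]
    have h1 : |s ^ δ * K s| = s ^ δ * |K s| := by
      rw [abs_mul, abs_of_nonneg (Real.rpow_nonneg hs0.le _)]
    have h2 : |s ^ (-δ) * K s| = s ^ (-δ) * |K s| := by
      rw [abs_mul, abs_of_nonneg (Real.rpow_nonneg hs0.le _)]
    have hexppos : (0 : ℝ) < Real.exp (L (r * s) - L r) := Real.exp_pos _
    calc ‖K s * Real.exp (L (r * s) - L r)‖
        = |K s| * Real.exp (L (r * s) - L r) := by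
          rw [Real.norm_eq_abs, abs_mul, abs_of_nonneg hexppos.le]
      _ ≤ |K s| * (Real.exp C₂ * (s ^ δ + s ^ (-δ))) := by
          apply mul_le_mul_of_nonneg_left _ (abs_nonneg _)
          calc Real.exp (L (r * s) - L r) ≤ Real.exp (C₂ + δ * |Real.log s|) := hexp1
            _ = Real.exp C₂ * Real.exp (δ * |Real.log s|) := Real.exp_add _ _
            _ ≤ Real.exp C₂ * (s ^ δ + s ^ (-δ)) :=
                mul_le_mul_of_nonneg_left hexp2 (Real.exp_pos _).le
      _ = g s := by rw [hgdef]; simp only [h1, h2]; ring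
  -- pointwise limit
  have h_lim : ∀ᵐ s ∂(MeasureTheory.volume.restrict (Set.Ioi 0)),
      Tendsto (fun r => K s * Real.exp (L (r * s) - L r)) atTop (nhds (K s)) := by
    rw [MeasureTheory.ae_restrict_iff' measurableSet_Ioi]
    apply Eventually.of_forall
    intro s hs
    have hs0 : (0 : ℝ) < s := hs
    have hzero : Tendsto (fun r => L (r * s) - L r) atTop (nhds 0) := by
      rw [Metric.tendsto_atTop]
      intro ε hε
      set η : ℝ := ε / (|Real.log s| + 1) with hηdef
      have hηpos : 0 < η := div_pos hε (by positivity)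
      have hEs : ∀ᶠ u in atTop, |E u| ≤ η := by
        have h := Metric.tendsto_nhds.1 hE0 η hηpos
        filter_upwards [h] with u hu
        rw [Real.dist_eq, sub_zero] at hu
        exact hu.le
      obtain ⟨R₁, hR₁⟩ := eventually_atTop.1 hEs
      set R₂ : ℝ := max R₁ 1 with hR₂def
      have hR₂pos : (0 : ℝ) < R₂ := lt_of_lt_of_le one_pos (le_max_right _ _)
      refine ⟨max R₂ (R₂ / s), fun r hr => ?_⟩
      have hr1 : R₂ ≤ r := le_trans (le_max_left _ _) hr
      have hr2 : R₂ / s ≤ r := le_trans (le_max_right _ _) hr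
      have hrs : R₂ ≤ r * s := by
        have := mul_le_mul_of_nonneg_right hr2 hs0.le
        rwa [div_mul_cancel₀ _ hs0.ne'] at this
      have hb := pair_bound η hηpos.le R₂ hR₂pos
        (fun u hu => hR₁ u (le_trans (le_max_left _ _) hu)) r hr1 s hs0 hrs
      rw [Real.dist_eq, sub_zero]
      have hfin : η * |Real.log s| < ε := by
        rw [hηdef, div_mul_eq_mul_div, div_lt_iff₀ (by positivity : (0:ℝ) < |Real.log s| + 1)]
        nlinarith [abs_nonneg (Real.log s)]
      exact lt_of_le_of_lt hb hfin
    have hexp : Tendsto (fun r => Real.exp (L (r * s) - L r)) atTop (nhds 1) := by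
      have := (Real.continuous_exp.tendsto 0).comp hzero
      simpa [Function.comp_def] using this
    have := hexp.const_mul (K s)
    simpa using this
  -- dominated convergence
  have hmain : Tendsto
      (fun r => ∫ s in Set.Ioi (0 : ℝ), K s * Real.exp (L (r * s) - L r))
      atTop (nhds (∫ t in Set.Ioi (0 : ℝ), K t)) :=
    MeasureTheory.tendsto_integral_filter_of_dominated_convergence g hF_meas h_bound hg_int h_lim
  -- change of variables
  refine hmain.congr' ?_
  filter_upwards [eventually_gt_atTop (0 : ℝ)] with r hr
  have hVpos : (0 : ℝ) < r ^ ρ r := Real.rpow_pos_of_pos hr _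
  have hstep1 : ∀ s ∈ Set.Ioi (0 : ℝ),
      K s * Real.exp (L (r * s) - L r) = (r ^ ρ r)⁻¹ * (K s * (r * s) ^ ρ (r * s)) := by
    intro s hs
    have hs0 : (0 : ℝ) < s := hs
    have hrs : (0 : ℝ) < r * s := mul_pos hr hs0
    have h1 : Real.exp (L (r * s)) = (r * s) ^ ρ (r * s) := by
      rw [Real.rpow_def_of_pos hrs, mul_comm (Real.log (r * s)) (ρ (r * s))]
    have h2 : Real.exp (L r) = r ^ ρ r := by
      rw [Real.rpow_def_of_pos hr, mul_comm (Real.log r) (ρ r)]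
    rw [Real.exp_sub, h1, h2]
    field_simp
  have hcv := MeasureTheory.integral_comp_mul_left_Ioi
    (fun t => K (t / r) * t ^ ρ t) 0 hr
  simp only [mul_zero, smul_eq_mul, mul_div_cancel_left₀ _ hr.ne'] at hcv
  calc (∫ s in Set.Ioi (0 : ℝ), K s * Real.exp (L (r * s) - L r))
      = ∫ s in Set.Ioi (0 : ℝ), (r ^ ρ r)⁻¹ * (K s * (r * s) ^ ρ (r * s)) :=
        MeasureTheory.setIntegral_congr_fun measurableSet_Ioi hstep1
    _ = (r ^ ρ r)⁻¹ * ∫ s in Set.Ioi (0 : ℝ), K s * (r * s) ^ ρ (r * s) :=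
        MeasureTheory.integral_const_mul _ _
    _ = (r ^ ρ r)⁻¹ * (r⁻¹ * ∫ t in Set.Ioi (0 : ℝ), K (t / r) * t ^ ρ t) := by rw [hcv]
    _ = 1 / (r * r ^ ρ r) * ∫ t in Set.Ioi (0 : ℝ), K (t / r) * t ^ ρ t := by
        rw [one_div, mul_inv]
        ring
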